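/- Let μ be a non-zero positive measure on ℝⁿ which is a temperate distribution. Then 0 belongs to the support of its Fourier transform μ̂ (i.e. μ̂ does not vanish on any neighborhood of the origin). -/

import Mathlib

open MeasureTheory Filter Metric Set

open scoped FourierTransform RealInnerProductSpace Convolution ComplexConjugate ContDiff Pointwise

section Aux

variable {V : Type*} [NormedAddCommGroup V] [InnerProductSpace ℝ V] [FiniteDimensional ℝ V]
  [MeasurableSpace V] [BorelSpace V]

/-- A smooth compactly supported function is a Schwartz function. -/
noncomputable def mySchwartz (f : V → ℂ) (hf : ContDiff ℝ ∞ f) (h2f : HasCompactSupport f) :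
    SchwartzMap V ℂ where
  toFun := f
  smooth' := hf
  decay' := by
    intro k m
    have hcont : Continuous fun x : V => ‖x‖ ^ k * ‖iteratedFDeriv ℝ m f x‖ :=
      ((continuous_norm.pow k).mul
        ((hf.continuous_iteratedFDeriv (by exact_mod_cast le_top)).norm))
    have hcs : HasCompactSupport fun x : V => ‖x‖ ^ k * ‖iteratedFDeriv ℝ m f x‖ := by
      apply HasCompactSupport.mul_left
      exact (h2f.iteratedFDeriv m).norm
    obtain ⟨C, hC⟩ := hcont.bounded_above_of_compact_support hcs
    exact ⟨C, fun x => (Real.le_norm_self _).trans (hC x)⟩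

lemma mySchwartz_coe (f : V → ℂ) (hf : ContDiff ℝ ∞ f) (h2f : HasCompactSupport f) :
    ⇑(mySchwartz f hf h2f) = f := rfl

/-- The Fourier transform turns convolutions into products. -/
lemma fourier_conv {f g : V → ℂ} (hf : Continuous f) (hcf : HasCompactSupport f)
    (hg : Continuous g) (hcg : HasCompactSupport g) (ξ : V) :
    𝓕 (f ⋆[ContinuousLinearMap.mul ℝ ℂ] g) ξ = 𝓕 f ξ * 𝓕 g ξ := by
  set c : V → ℂ := fun x => (Real.fourierChar (-⟪x, ξ⟫) : ℂ) with hc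
  have hcmul : ∀ x y : V, c (x + y) = c x * c y := by
    intro x y
    simp only [hc, inner_add_left, neg_add, ← Circle.coe_mul, ← AddChar.map_add_eq_mul]
  have hccont : Continuous c := by
    exact continuous_subtype_val.comp
      (Real.continuous_fourierChar.comp (continuous_inner.comp
        (continuous_id.prodMk continuous_const)).neg)
  -- the integrand on the product space
  set H : V × V → ℂ := fun p => c p.1 * (f p.2 * g (p.1 - p.2)) with hH
  have hHcont : Continuous H := by
    apply (hccont.comp continuous_fst).mul
    exact (hf.comp continuous_snd).mul (hg.comp (continuous_fst.sub continuous_snd))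
  have hHcs : HasCompactSupport H := by
    apply HasCompactSupport.intro
      ((hcg.prod hcf).image (continuous_fst.add continuous_snd |>.prodMk continuous_snd))
    intro p hp
    by_contra h0
    apply hp
    have hfp : f p.2 ≠ 0 := by
      intro h; apply h0; simp [hH, h]
    have hgp : g (p.1 - p.2) ≠ 0 := by
      intro h; apply h0; simp [hH, h]
    refine ⟨(p.1 - p.2, p.2), ⟨subset_tsupport _ hgp, subset_tsupport _ hfp⟩, ?_⟩
    simp
  have hHint : Integrable H (volume.prod volume) :=
    hHcont.integrable_of_hasCompactSupport hHcs
  calc 𝓕 (f ⋆[ContinuousLinearMap.mul ℝ ℂ] g) ξ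
      = ∫ x, c x * ∫ t, f t * g (x - t) := by
        simp only [Real.fourier_eq, Circle.smul_def, smul_eq_mul, convolution_def,
          ContinuousLinearMap.mul_apply', hc]
    _ = ∫ x, ∫ t, c x * (f t * g (x - t)) := by
        congr 1; funext x; rw [integral_const_mul]
    _ = ∫ t, ∫ x, c x * (f t * g (x - t)) := by
        exact integral_integral_swap hHint
    _ = ∫ t, c t * f t * 𝓕 g ξ := by
        congr 1; funext t
        have := integral_add_right_eq_self (μ := volume)
          (fun x => c x * (f t * g (x - t))) t
        rw [← this]
        have : ∀ y : V, c (y + t) * (f t * g (y + t - t)) = c t * f t * (c y * g y) := by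
          intro y
          rw [hcmul y t]
          simp only [add_sub_cancel_right]
          ring
        simp only [this]
        rw [integral_const_mul]
        simp only [Real.fourier_eq, Circle.smul_def, smul_eq_mul, hc]
    _ = 𝓕 f ξ * 𝓕 g ξ := by
        rw [integral_mul_const]
        simp only [Real.fourier_eq, Circle.smul_def, smul_eq_mul, hc]

/-- The Fourier transform of the conjugate reflection is the conjugate. -/
lemma fourier_flip (f : V → ℂ) (ξ : V) :
    𝓕 (fun x => conj (f (-x))) ξ = conj (𝓕 f ξ) := by
  have h1 : ∀ x : V, (Real.fourierChar (-⟪-x, ξ⟫) : ℂ) * conj (f (- -x))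
      = conj ((Real.fourierChar (-⟪x, ξ⟫) : ℂ) * f x) := by
    intro x
    simp only [neg_neg, inner_neg_left, neg_neg, map_mul]
    congr 1
    simp only [Real.fourierChar_apply, ← Complex.exp_conj, map_mul, Complex.conj_I,
      Complex.conj_ofReal]
    congr 1
    push_cast
    ring
  calc 𝓕 (fun x => conj (f (-x))) ξ
      = ∫ x, (Real.fourierChar (-⟪x, ξ⟫) : ℂ) * conj (f (-x)) := by
        simp only [Real.fourier_eq, Circle.smul_def, smul_eq_mul]
    _ = ∫ x, (Real.fourierChar (-⟪-x, ξ⟫) : ℂ) * conj (f (- -x)) := by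
        rw [← integral_neg_eq_self]
    _ = ∫ x, conj ((Real.fourierChar (-⟪x, ξ⟫) : ℂ) * f x) := by
        simp only [h1]
    _ = conj (𝓕 f ξ) := by
        rw [integral_conj]
        simp only [Real.fourier_eq, Circle.smul_def, smul_eq_mul]

end Aux

/-- A non-zero positive temperate measure on ℝⁿ has 0 in the support of its
Fourier transform: the distribution `μ̂ : φ ↦ ∫ 𝓕φ dμ` does not vanish on any
neighborhood of the origin. -/
theorem stmt2 (n : ℕ) (μ : Measure (EuclideanSpace ℝ (Fin n)))
    (hμ : μ ≠ 0) (htemp : μ.HasTemperateGrowth) (r : ℝ) (hr : 0 < r) :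
    ∃ φ : SchwartzMap (EuclideanSpace ℝ (Fin n)) ℂ,
      tsupport (φ : EuclideanSpace ℝ (Fin n) → ℂ) ⊆ Metric.ball 0 r ∧
      ∫ x, (SchwartzMap.fourierTransformCLM ℂ φ) x ∂μ ≠ 0 := by
  haveI := htemp
  set E := EuclideanSpace ℝ (Fin n)
  -- a point in the support of μ
  obtain ⟨ξ₀, hξ₀⟩ : ∃ ξ₀ : E, ∀ ε : ℝ, 0 < ε → μ (ball ξ₀ ε) ≠ 0 := by
    by_contra h
    push_neg at h
    apply hμ
    rw [← Measure.measure_univ_eq_zero]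
    apply measure_null_of_locally_null
    intro x _
    obtain ⟨ε, hε, h0⟩ := h x
    exact ⟨ball x ε, by rw [nhdsWithin_univ]; exact ball_mem_nhds x hε, h0⟩
  -- the bump function
  let g : ContDiffBump (0 : E) := ⟨r / 8, r / 4, by positivity, by linarith⟩
  -- the modulated bump ψ
  set ψ : E → ℂ := fun x =>
    Complex.exp ((2 * Real.pi * ⟪x, ξ₀⟫ : ℝ) * Complex.I) * (g x : ℂ) with hψdef
  have hinner : ContDiff ℝ ∞ fun x : E => ⟪x, ξ₀⟫ :=
    contDiff_id.inner ℝ contDiff_const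
  have hψs : ContDiff ℝ ∞ ψ := by
    have hexp : ContDiff ℝ ∞ Complex.exp := Complex.contDiff_exp (𝕜 := ℝ)
    apply ContDiff.mul
    · exact hexp.comp
        ((Complex.ofRealCLM.contDiff.comp (contDiff_const.mul hinner)).mul contDiff_const)
    · exact Complex.ofRealCLM.contDiff.comp g.contDiff
  have hψsupp : Function.support ψ ⊆ ball (0 : E) (r / 4) := by
    intro x hx
    have : g x ≠ 0 := by
      intro h; apply hx; simp [hψdef, h]
    have : x ∈ Function.support g := this
    rwa [g.support_eq] at this
  have hψc : HasCompactSupport ψ := by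
    apply HasCompactSupport.intro (isCompact_closedBall (0 : E) (r / 4))
    intro x hx
    by_contra h0
    exact hx (ball_subset_closedBall (hψsupp h0))
  -- the conjugate reflection
  set ψt : E → ℂ := fun x => conj (ψ (-x)) with hψtdef
  have hψts : ContDiff ℝ ∞ ψt := by
    have : ContDiff ℝ ∞ fun x : E => Complex.conjCLE (ψ (-x)) :=
      Complex.conjCLE.contDiff.comp (hψs.comp contDiff_neg)
    simpa [hψtdef, Complex.conjCLE_apply] using this
  have hψtsupp : Function.support ψt ⊆ ball (0 : E) (r / 4) := by
    intro x hx
    have hx' : ψ (-x) ≠ 0 := by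
      intro h; apply hx; simp [hψtdef, h]
    have := hψsupp hx'
    simpa using this
  have hψtc : HasCompactSupport ψt := by
    apply HasCompactSupport.intro (isCompact_closedBall (0 : E) (r / 4))
    intro x hx
    by_contra h0
    exact hx (ball_subset_closedBall (hψtsupp h0))
  -- the convolution
  set Φ : E → ℂ := ψ ⋆[ContinuousLinearMap.mul ℝ ℂ] ψt with hΦdef
  have hΦs : ContDiff ℝ ∞ Φ :=
    hψtc.contDiff_convolution_right (n := ⊤) _ hψs.continuous.locallyIntegrable hψts
  have hΦsupp : tsupport Φ ⊆ closedBall (0 : E) (r / 2) := by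
    have h1 : Function.support Φ ⊆ ball (0 : E) (r / 2) := by
      refine Set.Subset.trans (support_convolution_subset (ContinuousLinearMap.mul ℝ ℂ)) ?_
      calc Function.support ψ + Function.support ψt
          ⊆ ball (0 : E) (r / 4) + ball (0 : E) (r / 4) := add_subset_add hψsupp hψtsupp
        _ = ball (0 : E) (r / 2) := by
            rw [ball_add_ball (by positivity) (by positivity)]
            norm_num
            congr 1
            ring
    calc tsupport Φ ⊆ closure (ball (0 : E) (r / 2)) := closure_mono h1
      _ ⊆ closedBall (0 : E) (r / 2) := closure_ball_subset_closedBall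
  have hΦc : HasCompactSupport Φ :=
    (isCompact_closedBall (0 : E) (r / 2)).of_isClosed_subset (isClosed_tsupport _) hΦsupp
  -- as a Schwartz function
  refine ⟨mySchwartz Φ hΦs hΦc, ?_, ?_⟩
  · rw [mySchwartz_coe]
    exact hΦsupp.trans (closedBall_subset_ball (by linarith))
  -- the Fourier transform of Φ
  have hconv : ∀ ξ : E, 𝓕 Φ ξ = 𝓕 ψ ξ * conj (𝓕 ψ ξ) := by
    intro ξ
    rw [hΦdef, fourier_conv hψs.continuous hψc hψts.continuous hψtc, fourier_flip]
  have hpos : ∀ ξ : E, 𝓕 Φ ξ = ((Complex.normSq (𝓕 ψ ξ) : ℝ) : ℂ) := by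
    intro ξ
    rw [hconv ξ, Complex.mul_conj]
  -- value of 𝓕 ψ at ξ₀
  have hval : 𝓕 ψ ξ₀ ≠ 0 := by
    have : 𝓕 ψ ξ₀ = ((∫ x, g x : ℝ) : ℂ) := by
      rw [Real.fourier_eq']
      have : ∀ x : E, Complex.exp ((-2 * Real.pi * ⟪x, ξ₀⟫ : ℝ) * Complex.I) • ψ x
          = ((g x : ℝ) : ℂ) := by
        intro x
        rw [hψdef]
        simp only [smul_eq_mul, ← mul_assoc, ← Complex.exp_add]
        rw [← add_mul, ← Complex.ofReal_add]
        norm_num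
      simp only [this]
      exact integral_ofReal
    rw [this]
    simp only [ne_eq, Complex.ofReal_eq_zero]
    exact g.integral_pos.ne'
  -- continuity of 𝓕 ψ gives a neighborhood where it is nonzero
  have hcont : Continuous (𝓕 ψ) := by
    apply VectorFourier.fourierIntegral_continuous Real.continuous_fourierChar
      (by exact continuous_inner)
    exact hψs.continuous.integrable_of_hasCompactSupport hψc
  obtain ⟨δ, hδ, hball⟩ : ∃ δ > 0, ∀ ξ ∈ ball ξ₀ δ, 𝓕 ψ ξ ≠ 0 := by
    have := hcont.continuousAt (x := ξ₀) |>.eventually_ne hval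
    rw [Metric.eventually_nhds_iff_ball] at this
    obtain ⟨δ, hδ, h⟩ := this
    exact ⟨δ, hδ, h⟩
  -- integrability
  have hΦint : Integrable (𝓕 Φ) μ := by
    have := (SchwartzMap.fourierTransformCLM ℂ (mySchwartz Φ hΦs hΦc)).integrable (μ := μ)
    simpa [SchwartzMap.fourierTransformCLM_apply, SchwartzMap.fourier_coe, mySchwartz_coe] using this
  have hreint : Integrable (fun ξ => Complex.normSq (𝓕 ψ ξ)) μ := by
    have := hΦint.re
    apply this.congr
    filter_upwards with ξ
    rw [hpos ξ]
    simp
  -- positivity of the real integral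
  have hrealpos : 0 < ∫ ξ, Complex.normSq (𝓕 ψ ξ) ∂μ := by
    rw [integral_pos_iff_support_of_nonneg (fun ξ => Complex.normSq_nonneg _) hreint]
    have hsub : ball ξ₀ δ ⊆ Function.support fun ξ => Complex.normSq (𝓕 ψ ξ) := by
      intro ξ hξ
      simp only [Function.mem_support, ne_eq, Complex.normSq_eq_zero]
      exact hball ξ hξ
    calc (0 : ENNReal) < μ (ball ξ₀ δ) := (hξ₀ δ hδ).bot_lt
      _ ≤ _ := measure_mono hsub
  -- conclude
  have : ∫ x, (SchwartzMap.fourierTransformCLM ℂ (mySchwartz Φ hΦs hΦc)) x ∂μ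
      = ((∫ ξ, Complex.normSq (𝓕 ψ ξ) ∂μ : ℝ) : ℂ) := by
    calc ∫ x, (SchwartzMap.fourierTransformCLM ℂ (mySchwartz Φ hΦs hΦc)) x ∂μ
        = ∫ ξ, ((Complex.normSq (𝓕 ψ ξ) : ℝ) : ℂ) ∂μ := by
          apply integral_congr_ae
          filter_upwards with ξ
          rw [SchwartzMap.fourierTransformCLM_apply, SchwartzMap.fourier_coe, mySchwartz_coe, hpos ξ]
      _ = ((∫ ξ, Complex.normSq (𝓕 ψ ξ) ∂μ : ℝ) : ℂ) := integral_ofReal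
  rw [this]
  simp only [ne_eq, Complex.ofReal_eq_zero]
  exact hrealpos.ne'
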